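/- arXiv:2103.13831 — 5 statements merged into one kernel-verified Lean document; each statement's English description precedes it below -/
import Mathlib

section
/- Consider the discrete-time linear system x⁺ = A x + B u with A ∈ ℝ^{n×n}, B ∈ ℝ^{n×m}, and a compact convex input set U ⊆ ℝ^m. If X_inv ⊆ ℝ^n is a nonempty compact convex set such that for every x ∈ X_inv there exists u ∈ U with A x + B u ∈ X_inv (i.e., X_inv is a controlled invariant set), then there exists x_s ∈ X_inv and u_s ∈ U such that x_s = A x_s + B u_s (a controlled equilibrium point). -/
open Matrix Set Filter

set_option maxHeartbeats 1000000

theorem cis_contains_controlled_equilibrium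
    (n m : ℕ) (A : Matrix (Fin n) (Fin n) ℝ) (B : Matrix (Fin n) (Fin m) ℝ)
    (U : Set (Fin m → ℝ)) (hUc : IsCompact U) (hUconv : Convex ℝ U)
    (Xinv : Set (Fin n → ℝ)) (hne : Xinv.Nonempty) (hXc : IsCompact Xinv)
    (hXconv : Convex ℝ Xinv)
    (hinv : ∀ x ∈ Xinv, ∃ u ∈ U, A.mulVec x + B.mulVec u ∈ Xinv) :
    ∃ xs ∈ Xinv, ∃ us ∈ U, xs = A.mulVec xs + B.mulVec us := by
  classical
  obtain ⟨x0, hx0⟩ := hne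
  obtain ⟨u0, hu0, -⟩ := hinv x0 hx0
  have hchoice : ∀ z : Fin n → ℝ, ∃ u, u ∈ U ∧
      (z ∈ Xinv → A.mulVec z + B.mulVec u ∈ Xinv) := by
    intro z
    by_cases hz : z ∈ Xinv
    · obtain ⟨u, hu, h⟩ := hinv z hz; exact ⟨u, hu, fun _ => h⟩
    · exact ⟨u0, hu0, fun h => absurd h hz⟩
  choose φ hφU hφX using hchoice
  -- trajectory
  set x : ℕ → (Fin n → ℝ) :=
    fun k => Nat.rec x0 (fun _ xk => A.mulVec xk + B.mulVec (φ xk)) k with hxdef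
  have hx_succ : ∀ k, x (k + 1) = A.mulVec (x k) + B.mulVec (φ (x k)) := fun k => rfl
  have hxX : ∀ k, x k ∈ Xinv := by
    intro k
    induction k with
    | zero => exact hx0
    | succ k ih => rw [hx_succ]; exact hφX _ ih
  -- averages
  set y : ℕ → (Fin n → ℝ) :=
    fun N => ((N : ℝ))⁻¹ • ∑ k ∈ Finset.range N, x k with hydef
  set v : ℕ → (Fin m → ℝ) :=
    fun N => ((N : ℝ))⁻¹ • ∑ k ∈ Finset.range N, φ (x k) with hvdef
  have havg : ∀ (p : ℕ) (S : Set (Fin p → ℝ)) (z : ℕ → (Fin p → ℝ)),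
      Convex ℝ S → (∀ k, z k ∈ S) → ∀ N : ℕ, 0 < N →
      ((N : ℝ))⁻¹ • ∑ k ∈ Finset.range N, z k ∈ S := by
    intro p S z hconv hz N hN
    have h := hconv.sum_mem (t := Finset.range N) (w := fun _ => ((N : ℝ))⁻¹)
      (z := z) (fun i _ => by positivity)
      (by
        rw [Finset.sum_const, Finset.card_range, nsmul_eq_mul]
        field_simp)
      (fun i _ => hz i)
    rwa [← Finset.smul_sum] at h
  have hyX : ∀ N : ℕ, y (N + 1) ∈ Xinv := fun N =>
    havg n Xinv x hXconv hxX (N + 1) (Nat.succ_pos N)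
  have hvU : ∀ N : ℕ, v (N + 1) ∈ U := fun N =>
    havg m U (fun k => φ (x k)) hUconv (fun k => hφU (x k)) (N + 1) (Nat.succ_pos N)
  -- key identity
  have hkey : ∀ N : ℕ, A.mulVec (y N) + B.mulVec (v N)
      = y N + ((N : ℝ))⁻¹ • (x N - x 0) := by
    intro N
    have h1 : A.mulVec (y N) = ((N : ℝ))⁻¹ • ∑ k ∈ Finset.range N, A.mulVec (x k) := by
      simp only [hydef, mulVec_smul]
      congr 1
      have h := map_sum A.mulVecLin x (Finset.range N)
      simp only [Matrix.mulVecLin_apply] at h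
      exact h
    have h2 : B.mulVec (v N) = ((N : ℝ))⁻¹ • ∑ k ∈ Finset.range N, B.mulVec (φ (x k)) := by
      simp only [hvdef, mulVec_smul]
      congr 1
      have h := map_sum B.mulVecLin (fun k => φ (x k)) (Finset.range N)
      simp only [Matrix.mulVecLin_apply] at h
      exact h
    have h3 : ∑ k ∈ Finset.range N, x (k + 1)
        = (∑ k ∈ Finset.range N, x k) + (x N - x 0) := by
      have h := Finset.sum_range_succ' x N
      rw [Finset.sum_range_succ] at h
      have h' : (∑ k ∈ Finset.range N, x (k + 1)) + x 0
          = (∑ k ∈ Finset.range N, x k) + x N := h.symm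
      rw [eq_sub_of_add_eq h']
      abel
    rw [h1, h2, ← smul_add, ← Finset.sum_add_distrib]
    have hsum : ∀ k, A.mulVec (x k) + B.mulVec (φ (x k)) = x (k + 1) :=
      fun k => (hx_succ k).symm
    simp_rw [hsum]
    rw [h3, smul_add]
  -- extract convergent subsequence of (y (N+1), v (N+1))
  have hprodc : IsCompact (Xinv ×ˢ U) := hXc.prod hUc
  have hmem : ∀ N : ℕ, (y (N + 1), v (N + 1)) ∈ Xinv ×ˢ U := fun N => ⟨hyX N, hvU N⟩
  obtain ⟨a, haS, σ, hσ, hσtendsto⟩ := hprodc.tendsto_subseq hmem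
  refine ⟨a.1, haS.1, a.2, haS.2, ?_⟩
  -- continuity
  have hcont : Continuous (fun p : (Fin n → ℝ) × (Fin m → ℝ) =>
      A.mulVec p.1 + B.mulVec p.2) := by
    exact ((A.mulVecLin.continuous_of_finiteDimensional).comp continuous_fst).add
      ((B.mulVecLin.continuous_of_finiteDimensional).comp continuous_snd)
  have hlim1 : Tendsto (fun k => A.mulVec (y (σ k + 1)) + B.mulVec (v (σ k + 1)))
      atTop (nhds (A.mulVec a.1 + B.mulVec a.2)) := by
    have := (hcont.tendsto a).comp hσtendsto
    exact this
  -- error term tends to 0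
  obtain ⟨C, hC⟩ := hXc.isBounded.exists_norm_le
  have herr : Tendsto (fun k => (((σ k + 1 : ℕ) : ℝ))⁻¹ • (x (σ k + 1) - x 0))
      atTop (nhds 0) := by
    have hb : ∀ k, ‖(((σ k + 1 : ℕ) : ℝ))⁻¹ • (x (σ k + 1) - x 0)‖
        ≤ (((σ k + 1 : ℕ) : ℝ))⁻¹ * (2 * C) := by
      intro k
      rw [norm_smul]
      have h1 : ‖x (σ k + 1) - x 0‖ ≤ 2 * C := by
        calc ‖x (σ k + 1) - x 0‖ ≤ ‖x (σ k + 1)‖ + ‖x 0‖ := norm_sub_le _ _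
        _ ≤ C + C := add_le_add (hC _ (hxX (σ k + 1))) (hC _ (hxX 0))
        _ = 2 * C := by ring
      have h2 : ‖(((σ k + 1 : ℕ) : ℝ))⁻¹‖ = (((σ k + 1 : ℕ) : ℝ))⁻¹ := by
        rw [Real.norm_eq_abs, abs_of_nonneg]; positivity
      rw [h2]
      exact mul_le_mul_of_nonneg_left h1 (by positivity)
    have hg : Tendsto (fun k => (((σ k + 1 : ℕ) : ℝ))⁻¹ * (2 * C)) atTop (nhds 0) := by
      have h1 : Tendsto (fun k => (((σ k + 1 : ℕ) : ℝ))) atTop atTop := by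
        apply tendsto_natCast_atTop_atTop.comp
        exact tendsto_atTop_mono (fun k => Nat.le_succ_of_le (hσ.id_le k)) tendsto_id
      have := (h1.inv_tendsto_atTop).mul_const (2 * C)
      simpa using this
    exact squeeze_zero_norm hb hg
  have hlim2 : Tendsto (fun k => y (σ k + 1) + (((σ k + 1 : ℕ) : ℝ))⁻¹ • (x (σ k + 1) - x 0))
      atTop (nhds (a.1 + 0)) := by
    have hy1 : Tendsto (fun k => y (σ k + 1)) atTop (nhds a.1) :=
      (continuous_fst.tendsto a).comp hσtendsto
    exact hy1.add herr
  have heq : (fun k => A.mulVec (y (σ k + 1)) + B.mulVec (v (σ k + 1)))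
      = (fun k => y (σ k + 1) + (((σ k + 1 : ℕ) : ℝ))⁻¹ • (x (σ k + 1) - x 0)) := by
    funext k; exact hkey (σ k + 1)
  rw [heq] at hlim1
  have := tendsto_nhds_unique hlim1 hlim2
  rw [add_zero] at this
  exact this.symm
end

section
/- Consider the impulsive system ẋ = Ax with jumps x(τ_k) = x(τ_k⁻) + B u(τ_{k-1}) at times τ_k = kT, and a convex set Y ⊆ ℝ^n. Suppose Y_inv ⊆ Y is a nonempty compact convex impulsive controlled invariant set: for every x ∈ Y_inv there is u ∈ U (U ⊆ ℝ^m compact convex) with e^{At}x ∈ Y for all t ∈ [0,T] and e^{AT}x + Bu ∈ Y_inv. Then Y_inv contains a point x_s for which there exists u_s ∈ U with e^{AT}x_s + B u_s = x_s and e^{At}x_s ∈ Y for all t ∈ [0,T] (an impulsive controlled equilibrium). -/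
open Matrix Set

theorem icis_contains_impulsive_equilibrium
    (n m : ℕ) (A : Matrix (Fin n) (Fin n) ℝ) (B : Matrix (Fin n) (Fin m) ℝ)
    (T : ℝ) (hT : 0 < T)
    (U : Set (Fin m → ℝ)) (hUc : IsCompact U) (hUconv : Convex ℝ U)
    (Y : Set (Fin n → ℝ)) (hYconv : Convex ℝ Y)
    (Yinv : Set (Fin n → ℝ)) (hsub : Yinv ⊆ Y) (hne : Yinv.Nonempty)
    (hYc : IsCompact Yinv) (hYinvconv : Convex ℝ Yinv)
    (hinv : ∀ x ∈ Yinv, ∃ u ∈ U,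
      (∀ t ∈ Set.Icc (0 : ℝ) T, (NormedSpace.exp (t • A)).mulVec x ∈ Y) ∧
      (NormedSpace.exp (T • A)).mulVec x + B.mulVec u ∈ Yinv) :
    ∃ xs ∈ Yinv, ∃ us ∈ U,
      (NormedSpace.exp (T • A)).mulVec xs + B.mulVec us = xs ∧
      (∀ t ∈ Set.Icc (0 : ℝ) T, (NormedSpace.exp (t • A)).mulVec xs ∈ Y) := by
  classical
  set M : Matrix (Fin n) (Fin n) ℝ := NormedSpace.exp (T • A) with hM
  -- choice of control at each point of Yinv
  have step : ∀ x : Fin n → ℝ, x ∈ Yinv → ∃ u, u ∈ U ∧ M.mulVec x + B.mulVec u ∈ Yinv := by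
    intro x hx
    obtain ⟨u, hu, _, h2⟩ := hinv x hx
    exact ⟨u, hu, h2⟩
  choose! uof huofU hstep using step
  -- the iterated sequence
  let xseq : ℕ → (Fin n → ℝ) := fun k =>
    Nat.rec hne.choose (fun _ x => M.mulVec x + B.mulVec (uof x)) k
  have hmem : ∀ k, xseq k ∈ Yinv := by
    intro k
    induction k with
    | zero => exact hne.choose_spec
    | succ k ih => exact hstep _ ih
  have hrec : ∀ k, xseq (k + 1) = M.mulVec (xseq k) + B.mulVec (uof (xseq k)) := fun k => rfl
  set useq : ℕ → (Fin m → ℝ) := fun k => uof (xseq k) with huseq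
  have humem : ∀ k, useq k ∈ U := fun k => huofU _ (hmem k)
  -- Cesàro averages
  set a : ℕ → (Fin n → ℝ) := fun N => (N : ℝ)⁻¹ • ∑ k ∈ Finset.range N, xseq k with ha
  set b : ℕ → (Fin m → ℝ) := fun N => (N : ℝ)⁻¹ • ∑ k ∈ Finset.range N, useq k with hb
  have avg_mem : ∀ (E : Set (Fin n → ℝ)), Convex ℝ E → ∀ (z : ℕ → (Fin n → ℝ)),
      (∀ k, z k ∈ E) → ∀ N : ℕ, 0 < N → (N : ℝ)⁻¹ • ∑ k ∈ Finset.range N, z k ∈ E := by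
    intro E hE z hz N hN
    rw [Finset.smul_sum]
    refine hE.sum_mem (fun i _ => by positivity) ?_ (fun i _ => hz i)
    rw [Finset.sum_const, Finset.card_range, nsmul_eq_mul]
    field_simp
  have avg_memU : ∀ (E : Set (Fin m → ℝ)), Convex ℝ E → ∀ (z : ℕ → (Fin m → ℝ)),
      (∀ k, z k ∈ E) → ∀ N : ℕ, 0 < N → (N : ℝ)⁻¹ • ∑ k ∈ Finset.range N, z k ∈ E := by
    intro E hE z hz N hN
    rw [Finset.smul_sum]
    refine hE.sum_mem (fun i _ => by positivity) ?_ (fun i _ => hz i)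
    rw [Finset.sum_const, Finset.card_range, nsmul_eq_mul]
    field_simp
  have haMem : ∀ N : ℕ, 0 < N → a N ∈ Yinv := fun N hN =>
    avg_mem Yinv hYinvconv xseq hmem N hN
  have hbMem : ∀ N : ℕ, 0 < N → b N ∈ U := fun N hN =>
    avg_memU U hUconv useq humem N hN
  -- the key algebraic identity
  have hid : ∀ N : ℕ, M.mulVec (a N) + B.mulVec (b N)
      = a N + (N : ℝ)⁻¹ • (xseq N - xseq 0) := by
    intro N
    have h1 : M.mulVec (a N) = (N : ℝ)⁻¹ • ∑ k ∈ Finset.range N, M.mulVec (xseq k) := by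
      simp only [ha]
      rw [← M.mulVecLin_apply, _root_.map_smul, map_sum]
      simp [Matrix.mulVecLin_apply]
    have h2 : B.mulVec (b N) = (N : ℝ)⁻¹ • ∑ k ∈ Finset.range N, B.mulVec (useq k) := by
      simp only [hb]
      rw [← B.mulVecLin_apply, _root_.map_smul, map_sum]
      simp [Matrix.mulVecLin_apply]
    rw [h1, h2, ← smul_add, ← Finset.sum_add_distrib]
    have h3 : ∑ k ∈ Finset.range N, (M.mulVec (xseq k) + B.mulVec (useq k))
        = ∑ k ∈ Finset.range N, xseq (k + 1) := by
      refine Finset.sum_congr rfl fun k _ => (hrec k).symm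
    rw [h3]
    have h4 : ∑ k ∈ Finset.range N, xseq (k + 1)
        = (∑ k ∈ Finset.range N, xseq k) + (xseq N - xseq 0) := by
      have := Finset.sum_range_succ' xseq N
      rw [Finset.sum_range_succ] at this
      -- this : ∑ k in range N, xseq k + xseq N = ∑ k in range N, xseq (k+1) + xseq 0
      have h5 : ∑ k ∈ Finset.range N, xseq (k + 1) + xseq 0
          = ∑ k ∈ Finset.range N, xseq k + xseq N := this.symm
      have := congrArg (fun v => v - xseq 0) h5
      simp only [add_sub_cancel_right] at this
      rw [this]; abel
    rw [h4, smul_add, ha]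
  -- boundedness of xseq
  obtain ⟨C, hC⟩ := hYc.isBounded.exists_norm_le
  -- the error term tends to zero
  have herr : Filter.Tendsto (fun N : ℕ => (N : ℝ)⁻¹ • (xseq N - xseq 0))
      Filter.atTop (nhds 0) := by
    refine squeeze_zero_norm (a := fun N : ℕ => (C + C) / N) ?_ ?_
    · intro N
      rw [norm_smul, norm_inv, Real.norm_natCast]
      show ((N:ℝ))⁻¹ * ‖xseq N - xseq 0‖ ≤ (C + C) / (N:ℝ)
      rw [div_eq_inv_mul]
      gcongr
      calc ‖xseq N - xseq 0‖ ≤ ‖xseq N‖ + ‖xseq 0‖ := norm_sub_le _ _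
        _ ≤ C + C := add_le_add (hC _ (hmem N)) (hC _ (hmem 0))
    · exact tendsto_const_div_atTop_nhds_zero_nat _
  -- extract a convergent subsequence of the averages
  have hprod : IsCompact (Yinv ×ˢ U) := hYc.prod hUc
  have hpm : ∀ N : ℕ, (a (N + 1), b (N + 1)) ∈ Yinv ×ˢ U := fun N =>
    ⟨haMem _ (Nat.succ_pos N), hbMem _ (Nat.succ_pos N)⟩
  obtain ⟨⟨xs, us⟩, hxsus, φ, hφ, hconv⟩ := hprod.tendsto_subseq hpm
  obtain ⟨hxs, hus⟩ := hxsus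
  -- continuity of the defect map
  let G : (Fin n → ℝ) × (Fin m → ℝ) → (Fin n → ℝ) :=
    fun p => M.mulVec p.1 + B.mulVec p.2 - p.1
  have hGcont : Continuous G := by
    have h1 : Continuous fun p : (Fin n → ℝ) × (Fin m → ℝ) => M.mulVec p.1 :=
      (LinearMap.continuous_of_finiteDimensional M.mulVecLin).comp continuous_fst
    have h2 : Continuous fun p : (Fin n → ℝ) × (Fin m → ℝ) => B.mulVec p.2 :=
      (LinearMap.continuous_of_finiteDimensional B.mulVecLin).comp continuous_snd
    exact (h1.add h2).sub continuous_fst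
  have hG1 : Filter.Tendsto (fun N => G ((a (φ N + 1), b (φ N + 1)))) Filter.atTop
      (nhds (G (xs, us))) := (hGcont.tendsto _).comp hconv
  have hG2 : Filter.Tendsto (fun N => G ((a (φ N + 1), b (φ N + 1)))) Filter.atTop (nhds 0) := by
    have heq : (fun N => G ((a (φ N + 1), b (φ N + 1))))
        = fun N => ((φ N + 1 : ℕ) : ℝ)⁻¹ • (xseq (φ N + 1) - xseq 0) := by
      funext N
      show M.mulVec (a (φ N + 1)) + B.mulVec (b (φ N + 1)) - a (φ N + 1) = _
      rw [hid (φ N + 1)]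
      abel
    rw [heq]
    have hφt : Filter.Tendsto (fun N => φ N + 1) Filter.atTop Filter.atTop :=
      Filter.tendsto_atTop_mono (fun N => Nat.le_succ (φ N)) hφ.tendsto_atTop
    exact herr.comp hφt
  have hGzero : G (xs, us) = 0 := tendsto_nhds_unique hG1 hG2
  have hfix : M.mulVec xs + B.mulVec us = xs := by
    have : M.mulVec xs + B.mulVec us - xs = 0 := hGzero
    linear_combination (norm := abel_nf) this
  obtain ⟨u', _, hY', _⟩ := hinv xs hxs
  exact ⟨xs, hxs, us, hus, hfix, hY'⟩
end

section
/- Let A ∈ ℝ^{n×n}, B ∈ ℝ^{n×m}, U ⊆ ℝ^m a compact convex polytope, and X_inv ⊆ ℝ^n a compact convex polytope that is a controlled invariant set for x⁺ = Ax + Bu (i.e., 𝒰(x) := {u ∈ U : Ax + Bu ∈ X_inv} is nonempty for all x ∈ X_inv). Then the correspondence x ↦ 𝒰(x) is lower hemicontinuous on X_inv: for every x ∈ X_inv, every sequence x_k ∈ X_inv with x_k → x, and every u ∈ 𝒰(x), there exist u_k ∈ 𝒰(x_k) with u_k → u. -/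
open Matrix Set Filter

open Finset in
lemma cone_cara {E : Type*} [AddCommGroup E] [Module ℝ E] (G : Finset E) :
    ∀ c : E → ℝ, (∀ v, 0 ≤ c v) →
      ∃ T : Finset E, T ⊆ G ∧ LinearIndependent ℝ (fun i : T => (i : E)) ∧
        ∃ d : E → ℝ, (∀ v, 0 ≤ d v) ∧ ∑ v ∈ T, d v • v = ∑ v ∈ G, c v • v := by
  induction G using Finset.strongInduction with
  | _ G ih =>
    intro c hc
    classical
    by_cases hli : LinearIndependent ℝ (fun i : G => (i : E))
    · exact ⟨G, subset_rfl, hli, c, hc, rfl⟩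
    obtain ⟨g, hg0, i0, hgi0⟩ := Fintype.not_linearIndependent_iff.mp hli
    set d : E → ℝ := fun v => if h : v ∈ G then g ⟨v, h⟩ else 0 with hd_def
    have hdsum : ∑ v ∈ G, d v • v = 0 := by
      rw [← Finset.sum_attach G (fun v => d v • v)]
      rw [Finset.univ_eq_attach] at hg0
      rw [← hg0]
      apply Finset.sum_congr rfl
      intro i _
      simp [hd_def, i.2]
    obtain ⟨e, he0, v1, hv1G, hv1⟩ :
        ∃ e : E → ℝ, (∑ v ∈ G, e v • v = 0) ∧ ∃ v1 ∈ G, 0 < e v1 := by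
      rcases lt_or_gt_of_ne hgi0 with h | h
      · refine ⟨fun v => -d v, ?_, i0, i0.2, ?_⟩
        · simp only [neg_smul, Finset.sum_neg_distrib, hdsum, neg_zero]
        · simp only [hd_def, dif_pos i0.2]; simpa using h
      · refine ⟨d, hdsum, i0, i0.2, ?_⟩
        simp only [hd_def, dif_pos i0.2]; simpa using h
    -- minimize ratio over positive part
    have hSne : (G.filter (fun v => 0 < e v)).Nonempty := ⟨v1, Finset.mem_filter.mpr ⟨hv1G, hv1⟩⟩
    obtain ⟨v0, hv0S, hmin⟩ := Finset.exists_min_image _ (fun v => c v / e v) hSne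
    obtain ⟨hv0G, hev0⟩ := Finset.mem_filter.mp hv0S
    set t : ℝ := c v0 / e v0 with ht_def
    have ht : 0 ≤ t := div_nonneg (hc v0) hev0.le
    set c' : E → ℝ := fun v => if v ∈ G then c v - t * e v else c v with hc'_def
    have hc' : ∀ v, 0 ≤ c' v := by
      intro v
      simp only [hc'_def]
      split_ifs with hvG
      · by_cases hev : 0 < e v
        · have h1 : t ≤ c v / e v := hmin v (Finset.mem_filter.mpr ⟨hvG, hev⟩)
          have h2 : t * e v ≤ c v := by
            rw [← le_div_iff₀ hev] at *; exact h1
          linarith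
        · push_neg at hev
          have : t * e v ≤ 0 := mul_nonpos_of_nonneg_of_nonpos ht hev
          linarith [hc v]
      · exact hc v
    have hc'v0 : c' v0 = 0 := by
      simp only [hc'_def, if_pos hv0G, ht_def]
      rw [div_mul_cancel₀ _ hev0.ne']
      ring
    have hsum' : ∑ v ∈ G.erase v0, c' v • v = ∑ v ∈ G, c v • v := by
      rw [Finset.sum_erase _ (by rw [hc'v0, zero_smul])]
      have : ∀ v ∈ G, c' v • v = c v • v - t • (e v • v) := by
        intro v hvG
        simp only [hc'_def, if_pos hvG, sub_smul, smul_smul]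
      rw [Finset.sum_congr rfl this, Finset.sum_sub_distrib, ← Finset.smul_sum, he0,
        smul_zero, sub_zero]
    obtain ⟨T, hTsub, hTli, d2, hd2, hsum2⟩ :=
      ih (G.erase v0) (Finset.erase_ssubset hv0G) c' hc'
    exact ⟨T, hTsub.trans (Finset.erase_subset _ _), hTli, d2, hd2, by rw [hsum2, hsum']⟩

open Finset in
lemma linIndep_bound {E : Type*} [NormedAddCommGroup E] [NormedSpace ℝ E]
    [FiniteDimensional ℝ E] (T : Finset E)
    (hli : LinearIndependent ℝ (fun i : T => (i : E))) :
    ∃ K > 0, ∀ c : E → ℝ, ∑ v ∈ T, |c v| ≤ K * ‖∑ v ∈ T, c v • v‖ := by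
  classical
  set L : (T → ℝ) →ₗ[ℝ] E := Fintype.linearCombination ℝ (fun i : T => (i : E)) with hL_def
  have hLapp : ∀ f : T → ℝ, L f = ∑ i : T, f i • (i : E) := fun f => rfl
  have hker : LinearMap.ker L = ⊥ := by
    rw [LinearMap.ker_eq_bot']
    intro f hf
    funext i
    exact Fintype.linearIndependent_iff.mp hli f (by rw [← hLapp]; exact hf) i
  obtain ⟨g, hg⟩ := LinearMap.exists_leftInverse_of_injective L hker
  set Gc : E →L[ℝ] (T → ℝ) := LinearMap.toContinuousLinearMap g with hGc_def
  refine ⟨(T.card + 1) * (‖Gc‖ + 1), by positivity, fun c => ?_⟩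
  set ct : T → ℝ := fun i => c i with hct_def
  have hLct : L ct = ∑ v ∈ T, c v • v := by
    rw [hLapp, Finset.univ_eq_attach, Finset.sum_attach T (fun v => c v • v)]
  have hrec : ct = Gc (L ct) := by
    have := LinearMap.congr_fun hg ct
    simp only [LinearMap.comp_apply, LinearMap.id_apply] at this
    simp [hGc_def, this]
  have hnormct : ‖ct‖ ≤ ‖Gc‖ * ‖∑ v ∈ T, c v • v‖ := by
    calc ‖ct‖ = ‖Gc (L ct)‖ := by rw [← hrec]
    _ ≤ ‖Gc‖ * ‖L ct‖ := Gc.le_opNorm _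
    _ = ‖Gc‖ * ‖∑ v ∈ T, c v • v‖ := by rw [hLct]
  have hsum : ∑ v ∈ T, |c v| ≤ T.card * ‖ct‖ := by
    rw [← Finset.sum_attach T (fun v => |c v|)]
    calc ∑ i ∈ T.attach, |c ↑i| ≤ T.attach.card • ‖ct‖ := by
          apply Finset.sum_le_card_nsmul
          intro i _
          simpa [hct_def] using norm_le_pi_norm ct i
    _ = T.card * ‖ct‖ := by rw [Finset.card_attach, nsmul_eq_mul]
  have hN : (0:ℝ) ≤ ‖∑ v ∈ T, c v • v‖ := norm_nonneg _
  have hG0 : (0:ℝ) ≤ ‖Gc‖ := norm_nonneg _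
  have hcard : (0:ℝ) ≤ T.card := Nat.cast_nonneg _
  nlinarith [mul_le_mul_of_nonneg_left hnormct hcard]

open Finset in
lemma cone_bound {E : Type*} [NormedAddCommGroup E] [NormedSpace ℝ E]
    [FiniteDimensional ℝ E] (G : Finset E) :
    ∃ K > 0, ∀ c : E → ℝ, (∀ v, 0 ≤ c v) →
      ∃ d : E → ℝ, (∀ v, 0 ≤ d v) ∧ (∑ v ∈ G, d v • v = ∑ v ∈ G, c v • v) ∧
        ∑ v ∈ G, d v ≤ K * ‖∑ v ∈ G, c v • v‖ := by
  classical
  have hκ : ∀ T : Finset E, ∃ K, 0 < K ∧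
      (LinearIndependent ℝ (fun i : T => (i : E)) →
        ∀ c : E → ℝ, ∑ v ∈ T, |c v| ≤ K * ‖∑ v ∈ T, c v • v‖) := by
    intro T
    by_cases h : LinearIndependent ℝ (fun i : T => (i : E))
    · obtain ⟨K, hK, hb⟩ := linIndep_bound T h
      exact ⟨K, hK, fun _ => hb⟩
    · exact ⟨1, one_pos, fun h' => absurd h' h⟩
  choose κ hκpos hκb using hκ
  set K : ℝ := 1 + ∑ T ∈ G.powerset, κ T with hK_def
  have hKκ : ∀ T ∈ G.powerset, κ T ≤ K := by
    intro T hT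
    have h1 : κ T ≤ ∑ S ∈ G.powerset, κ S :=
      Finset.single_le_sum (fun S _ => (hκpos S).le) hT
    linarith
  have hKpos : 0 < K := by
    have : (0:ℝ) ≤ ∑ T ∈ G.powerset, κ T := Finset.sum_nonneg fun S _ => (hκpos S).le
    linarith
  refine ⟨K, hKpos, fun c hc => ?_⟩
  obtain ⟨T, hTG, hli, d, hd, hsum⟩ := cone_cara G c hc
  set d' : E → ℝ := fun v => if v ∈ T then d v else 0 with hd'_def
  have hd'0 : ∀ v, 0 ≤ d' v := by
    intro v; simp only [hd'_def]; split_ifs; exacts [hd v, le_rfl]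
  have hTd' : ∀ (f : E → E), ∑ v ∈ T, d' v • f v = ∑ v ∈ T, d v • f v :=
    fun f => Finset.sum_congr rfl fun v hv => by simp [hd'_def, if_pos hv]
  have hGsum : ∑ v ∈ G, d' v • v = ∑ v ∈ T, d v • v := by
    rw [← Finset.sum_subset hTG (fun v _ hv => by simp [hd'_def, if_neg hv])]
    exact hTd' id
  have hGsum1 : ∑ v ∈ G, d' v = ∑ v ∈ T, d v := by
    rw [← Finset.sum_subset hTG (fun v _ hv => by simp [hd'_def, if_neg hv])]
    exact Finset.sum_congr rfl fun v hv => by simp [hd'_def, if_pos hv]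
  refine ⟨d', hd'0, by rw [hGsum, hsum], ?_⟩
  rw [hGsum1]
  calc ∑ v ∈ T, d v = ∑ v ∈ T, |d v| :=
        Finset.sum_congr rfl fun v _ => (abs_of_nonneg (hd v)).symm
  _ ≤ κ T * ‖∑ v ∈ T, d v • v‖ := hκb T hli d
  _ ≤ K * ‖∑ v ∈ T, d v • v‖ :=
        mul_le_mul_of_nonneg_right (hKκ T (Finset.mem_powerset.mpr hTG)) (norm_nonneg _)
  _ = K * ‖∑ v ∈ G, c v • v‖ := by rw [hsum]

open Finset in
lemma mem_hull_rep {E : Type*} [NormedAddCommGroup E] [NormedSpace ℝ E]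
    (F : Finset E) (y : E) (hy : y ∈ convexHull ℝ (F : Set E)) :
    ∃ w : E → ℝ, (∀ v, 0 ≤ w v) ∧ ∑ v ∈ F, w v = 1 ∧ ∑ v ∈ F, w v • v = y := by
  classical
  rw [Finset.convexHull_eq] at hy
  obtain ⟨w, h0, h1, hcm⟩ := hy
  rw [Finset.centerMass_eq_of_sum_1 _ _ h1] at hcm
  refine ⟨fun v => if v ∈ F then w v else 0, ?_, ?_, ?_⟩
  · intro v; dsimp only; split_ifs with h; exacts [h0 v h, le_rfl]
  · rw [Finset.sum_ite_of_true (fun v hv => hv) w (fun _ => 0)]; exact h1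
  · simp only [ite_smul, zero_smul]
    rw [Finset.sum_ite_of_true (fun v hv => hv) (fun v => w v • v) (fun _ => 0)]
    simpa using hcm

lemma radial_hull {E : Type*} [NormedAddCommGroup E] [NormedSpace ℝ E]
    [FiniteDimensional ℝ E] (F : Finset E) (p : E)
    (hp : p ∈ convexHull ℝ (F : Set E)) :
    ∃ ε > 0, ∀ y ∈ convexHull ℝ (F : Set E), y ≠ p → ‖y - p‖ ≤ ε →
      p + (ε / ‖y - p‖) • (y - p) ∈ convexHull ℝ (F : Set E) := by
  classical
  set G : Finset E := F.image (fun v => v - p) with hG_def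
  obtain ⟨K, hK, hbound⟩ := cone_bound G
  refine ⟨K⁻¹, by positivity, ?_⟩
  intro y hy hyp hynear
  set r : ℝ := ‖y - p‖ with hr_def
  have hr : 0 < r := by
    rw [hr_def]; exact norm_pos_iff.mpr (sub_ne_zero.mpr hyp)
  obtain ⟨w, hw0, hw1, hwsum⟩ := mem_hull_rep F y hy
  -- y - p as a nonneg combination over G
  set c : E → ℝ := fun u => w (u + p) with hc_def
  have hinj : Set.InjOn (fun v => v - p) ↑F := fun a _ b _ h => by
    simpa using sub_left_injective h
  have hcG : ∑ u ∈ G, c u • u = y - p := by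
    rw [hG_def, Finset.sum_image (fun a ha b hb h => hinj ha hb h)]
    have : ∀ v ∈ F, c (v - p) • (v - p) = w v • (v - p) := by
      intro v _; simp [hc_def]
    rw [Finset.sum_congr rfl this]
    have : ∑ v ∈ F, w v • (v - p) = (∑ v ∈ F, w v • v) - (∑ v ∈ F, w v) • p := by
      rw [Finset.sum_smul, ← Finset.sum_sub_distrib]
      exact Finset.sum_congr rfl fun v _ => by rw [smul_sub]
    rw [this, hwsum, hw1, one_smul]
  have hc0 : ∀ u, 0 ≤ c u := fun u => hw0 (u + p)
  obtain ⟨d, hd0, hdsum, hdbnd⟩ := hbound c hc0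
  rw [hcG] at hdsum hdbnd
  -- scale
  set a : ℝ := K⁻¹ / r with ha_def
  have ha : 0 < a := by positivity
  set d' : E → ℝ := fun u => a * d u with hd'_def
  have hd'0 : ∀ u, 0 ≤ d' u := fun u => mul_nonneg ha.le (hd0 u)
  have hd'sum : ∑ u ∈ G, d' u • u = a • (y - p) := by
    simp only [hd'_def, mul_smul, ← Finset.smul_sum, hdsum]
  set s : ℝ := ∑ u ∈ G, d' u with hs_def
  have hs0 : 0 ≤ s := Finset.sum_nonneg fun u _ => hd'0 u
  have hs1 : s ≤ 1 := by
    have h1 : ∑ u ∈ G, d' u = a * ∑ u ∈ G, d u := by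
      rw [Finset.mul_sum]
    have h2 : a * ∑ u ∈ G, d u ≤ a * (K * r) := by
      apply mul_le_mul_of_nonneg_left _ ha.le
      simpa [hr_def] using hdbnd
    have h3 : a * (K * r) = 1 := by
      rw [ha_def]; field_simp
    rw [hs_def, h1]; linarith
  -- the target point
  have htarget : p + a • (y - p) = p + ∑ u ∈ G, d' u • u := by rw [hd'sum]
  rw [htarget]
  rcases eq_or_lt_of_le hs0 with hseq | hspos
  · -- s = 0 : all d' vanish on G
    have : ∀ u ∈ G, d' u = 0 :=
      (Finset.sum_eq_zero_iff_of_nonneg fun u _ => hd'0 u).mp hseq.symm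
    have hz : ∑ u ∈ G, d' u • u = 0 :=
      Finset.sum_eq_zero fun u hu => by rw [this u hu, zero_smul]
    rw [hz, add_zero]; exact hp
  · -- s > 0 : centerMass argument
    have hmem : ∀ u ∈ G, u + p ∈ (F : Set E) := by
      intro u hu
      rw [hG_def] at hu
      obtain ⟨v, hv, rfl⟩ := Finset.mem_image.mp hu
      simpa using hv
    have hq : G.centerMass d' (fun u => u + p) ∈ convexHull ℝ (F : Set E) :=
      Finset.centerMass_mem_convexHull G (fun u _ => hd'0 u) hspos hmem
    set q := G.centerMass d' (fun u => u + p) with hq_def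
    have hsq : s • q = ∑ u ∈ G, d' u • (u + p) := by
      rw [hq_def, Finset.centerMass, ← hs_def, smul_inv_smul₀ (ne_of_gt hspos)]
    have hzq : p + ∑ u ∈ G, d' u • u = (1 - s) • p + s • q := by
      rw [hsq]
      have : ∑ u ∈ G, d' u • (u + p) = (∑ u ∈ G, d' u • u) + s • p := by
        rw [hs_def, Finset.sum_smul, ← Finset.sum_add_distrib]
        exact Finset.sum_congr rfl fun u _ => by rw [smul_add]
      rw [this, sub_smul, one_smul]
      abel
    rw [hzq]
    exact (convex_convexHull ℝ (F : Set E)) hp hq (by linarith) hs0 (by ring)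

theorem correspondence_lower_hemicontinuous
    (n m : ℕ) (A : Matrix (Fin n) (Fin n) ℝ) (B : Matrix (Fin n) (Fin m) ℝ)
    (U : Set (Fin m → ℝ)) (FU : Finset (Fin m → ℝ)) (hU : U = convexHull ℝ (FU : Set (Fin m → ℝ)))
    (Xinv : Set (Fin n → ℝ)) (FX : Finset (Fin n → ℝ))
    (hX : Xinv = convexHull ℝ (FX : Set (Fin n → ℝ)))
    (hcis : ∀ x ∈ Xinv, ∃ u ∈ U, A.mulVec x + B.mulVec u ∈ Xinv) :
    ∀ x ∈ Xinv, ∀ xk : ℕ → (Fin n → ℝ), (∀ k, xk k ∈ Xinv) →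
      Filter.Tendsto xk Filter.atTop (nhds x) →
      ∀ u ∈ U, A.mulVec x + B.mulVec u ∈ Xinv →
        ∃ uk : ℕ → (Fin m → ℝ),
          (∀ k, uk k ∈ U ∧ A.mulVec (xk k) + B.mulVec (uk k) ∈ Xinv) ∧
          Filter.Tendsto uk Filter.atTop (nhds u) := by
  intro x hx xk hxk hxktend u hu huinv
  -- convexity
  have hUconv : Convex ℝ U := hU ▸ convex_convexHull ℝ _
  have hXconv : Convex ℝ Xinv := hX ▸ convex_convexHull ℝ _
  -- bound on U
  obtain ⟨M, hM⟩ : ∃ M, ∀ z ∈ U, ‖z‖ ≤ M := by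
    have hb : Bornology.IsBounded U := by
      rw [hU, isBounded_convexHull]
      exact FU.finite_toSet.isBounded
    exact isBounded_iff_forall_norm_le.mp hb
  have hM0 : 0 ≤ M := le_trans (norm_nonneg u) (hM u hu)
  -- radial convexity at x
  obtain ⟨ε, hε, hrad⟩ := radial_hull FX x (hX ▸ hx)
  set C : ℝ := (M + M) / ε with hC_def
  have hC0 : 0 ≤ C := by positivity
  have claim : ∀ k, ∃ w, (w ∈ U ∧ A.mulVec (xk k) + B.mulVec w ∈ Xinv) ∧
      (‖xk k - x‖ ≤ ε → ‖w - u‖ ≤ C * ‖xk k - x‖) := by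
    intro k
    set y := xk k with hy_def
    have hy : y ∈ Xinv := hxk k
    by_cases h1 : y = x
    · refine ⟨u, ⟨hu, ?_⟩, fun _ => ?_⟩
      · rw [h1]; exact huinv
      · simp only [sub_self, norm_zero]
        positivity
    by_cases h2 : ‖y - x‖ ≤ ε
    · set r : ℝ := ‖y - x‖ with hr_def
      have hr : 0 < r := norm_pos_iff.mpr (sub_ne_zero.mpr h1)
      have hy' : x + (ε / r) • (y - x) ∈ Xinv := hX ▸ hrad y (hX ▸ hy) h1 h2
      set y' := x + (ε / r) • (y - x) with hy'_def
      obtain ⟨wy, hwyU, hwyinv⟩ := hcis y' hy'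
      set t : ℝ := r / ε with ht_def
      have ht0 : 0 < t := by positivity
      have ht1 : t ≤ 1 := (div_le_one hε).mpr h2
      have hyid : y = x + t • (y' - x) := by
        rw [hy'_def]
        have : (x + (ε / r) • (y - x)) - x = (ε / r) • (y - x) := by abel
        rw [this, smul_smul, ht_def]
        rw [div_mul_div_comm]
        rw [mul_comm r ε, div_self (by positivity), one_smul]
        abel
      refine ⟨u + t • (wy - u), ⟨?_, ?_⟩, fun _ => ?_⟩
      · have := hUconv hu hwyU (by linarith : (0:ℝ) ≤ 1 - t) ht0.le (by ring)
        convert this using 1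
        module
      · have hkey : A.mulVec y + B.mulVec (u + t • (wy - u)) =
            (1 - t) • (A.mulVec x + B.mulVec u) + t • (A.mulVec y' + B.mulVec wy) := by
          rw [hyid]
          simp only [Matrix.mulVec_add, Matrix.mulVec_smul, Matrix.mulVec_sub]
          module
        rw [hkey]
        exact hXconv huinv hwyinv (by linarith) ht0.le (by ring)
      · have heq : (u + t • (wy - u)) - u = t • (wy - u) := by abel
        rw [heq, norm_smul, Real.norm_eq_abs, abs_of_pos ht0]
        have h3 : ‖wy - u‖ ≤ M + M :=
          le_trans (norm_sub_le _ _) (add_le_add (hM wy hwyU) (hM u hu))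
        calc t * ‖wy - u‖ ≤ t * (M + M) :=
              mul_le_mul_of_nonneg_left h3 ht0.le
        _ = C * r := by rw [ht_def, hC_def]; field_simp
        _ = C * ‖y - x‖ := by rw [hr_def]
    · obtain ⟨w, hwU, hwinv⟩ := hcis y hy
      exact ⟨w, ⟨hwU, hwinv⟩, fun h => absurd h h2⟩
  choose uk hmem hbnd using claim
  refine ⟨uk, hmem, ?_⟩
  rw [Metric.tendsto_atTop]
  intro δ hδ
  have hη : 0 < min ε (δ / (C + 1)) := lt_min hε (by positivity)
  obtain ⟨N, hN⟩ := (Metric.tendsto_atTop.mp hxktend) (min ε (δ / (C + 1))) hη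
  refine ⟨N, fun k hk => ?_⟩
  have hdk := hN k hk
  rw [dist_eq_norm] at hdk ⊢
  have h1 : ‖xk k - x‖ ≤ ε := le_trans hdk.le (min_le_left _ _)
  have h2 : ‖xk k - x‖ < δ / (C + 1) := lt_of_lt_of_le hdk (min_le_right _ _)
  have h3 := hbnd k h1
  have h4 : C * ‖xk k - x‖ < δ := by
    have h5 : C * ‖xk k - x‖ ≤ C * (δ / (C + 1)) :=
      mul_le_mul_of_nonneg_left h2.le hC0
    have h6 : C * (δ / (C + 1)) < δ := by
      have hpc : (0:ℝ) < C + 1 := by linarith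
      rw [← mul_div_assoc, div_lt_iff₀ hpc]
      nlinarith
    linarith
  linarith
end

section
/- Let a < b be reals, n = 2m, and let p be a univariate real polynomial of degree at most n. Then p(w) ≥ 0 for all w ∈ [a,b] if and only if there exist polynomials q₁ of degree ≤ m and q₂ of degree ≤ m−1 such that p(w) = q₁(w)² + (w−a)(b−w) q₂(w)² for all w. -/
open Polynomial Set

namespace ML


def Erep (a b : ℝ) (k : ℕ) (p : Polynomial ℝ) : Prop :=
  ∃ x y : Polynomial ℝ, x.degree ≤ (k : ℕ) ∧ y.degree < (k : ℕ) ∧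
    ∀ w : ℝ, p.eval w = (x.eval w) ^ 2 + (w - a) * (b - w) * (y.eval w) ^ 2

def Orep (a b : ℝ) (k : ℕ) (p : Polynomial ℝ) : Prop :=
  ∃ x y : Polynomial ℝ, x.degree ≤ (k : ℕ) ∧ y.degree ≤ (k : ℕ) ∧
    ∀ w : ℝ, p.eval w = (w - a) * (x.eval w) ^ 2 + (b - w) * (y.eval w) ^ 2

lemma wb_add_le {x y : WithBot ℕ} {k l : ℕ} (hx : x ≤ (k:ℕ)) (hy : y ≤ (l:ℕ)) :
    x + y ≤ ((k + l : ℕ) : WithBot ℕ) := by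
  push_cast
  exact add_le_add hx hy

lemma wb_add_lt {x y : WithBot ℕ} {k l : ℕ} (hx : x ≤ (k:ℕ)) (hy : y < (l:ℕ)) :
    x + y < ((k + l : ℕ) : WithBot ℕ) := by
  cases x with
  | bot => rw [WithBot.bot_add]; exact WithBot.bot_lt_coe _
  | coe n =>
    cases y with
    | bot => rw [WithBot.add_bot]; exact WithBot.bot_lt_coe _
    | coe n' =>
      simp only [Nat.cast_withBot, ← WithBot.coe_add] at *
      rw [WithBot.coe_le_coe] at hx
      rw [WithBot.coe_lt_coe] at hy
      rw [WithBot.coe_lt_coe]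
      omega

lemma wb_lt_add {x y : WithBot ℕ} {k l : ℕ} (hx : x < (k:ℕ)) (hy : y ≤ (l:ℕ)) :
    x + y < ((k + l : ℕ) : WithBot ℕ) := by
  rw [add_comm x y, (by omega : k + l = l + k)]
  exact wb_add_lt hy hx

lemma wb_two_add {x y : WithBot ℕ} {k l : ℕ} (hx : x < (k:ℕ)) (hy : y < (l:ℕ)) :
    2 + (x + y) ≤ ((k + l : ℕ) : WithBot ℕ) := by
  cases x with
  | bot => rw [WithBot.bot_add, WithBot.add_bot]; exact bot_le
  | coe n =>
    cases y with
    | bot => rw [WithBot.add_bot, WithBot.add_bot]; exact bot_le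
    | coe n' =>
      have h2 : (2 : WithBot ℕ) = ((2:ℕ) : WithBot ℕ) := rfl
      simp only [h2, Nat.cast_withBot, ← WithBot.coe_add] at *
      rw [WithBot.coe_lt_coe] at hx hy
      rw [WithBot.coe_le_coe]
      omega

lemma degree_mul_le' {p q : Polynomial ℝ} {k l : ℕ} (hp : p.degree ≤ (k:ℕ))
    (hq : q.degree ≤ (l:ℕ)) : (p*q).degree ≤ ((k + l : ℕ) : WithBot ℕ) :=
  le_trans (degree_mul_le _ _) (wb_add_le hp hq)

lemma degree_mul_lt {p q : Polynomial ℝ} {k l : ℕ} (hp : p.degree ≤ (k:ℕ))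
    (hq : q.degree < (l:ℕ)) : (p*q).degree < ((k + l : ℕ) : WithBot ℕ) :=
  lt_of_le_of_lt (degree_mul_le _ _) (wb_add_lt hp hq)

lemma degree_mul_lt' {p q : Polynomial ℝ} {k l : ℕ} (hp : p.degree < (k:ℕ))
    (hq : q.degree ≤ (l:ℕ)) : (p*q).degree < ((k + l : ℕ) : WithBot ℕ) :=
  lt_of_le_of_lt (degree_mul_le _ _) (wb_lt_add hp hq)

lemma degree_g_le {a b : ℝ} : ((X - C a) * (C b - X) : Polynomial ℝ).degree ≤ 2 := by
  refine (degree_mul_le _ _).trans ?_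
  have h : (C b - X : Polynomial ℝ) = -(X - C b) := by ring
  rw [h, degree_neg, degree_X_sub_C, degree_X_sub_C]
  norm_num

lemma degree_g_mul_le {a b : ℝ} {y v : Polynomial ℝ} {k l : ℕ}
    (hy : y.degree < (k:ℕ)) (hv : v.degree < (l:ℕ)) :
    (((X - C a) * (C b - X)) * (y * v)).degree ≤ ((k + l : ℕ) : WithBot ℕ) := by
  refine (degree_mul_le _ _).trans ?_
  exact le_trans (add_le_add degree_g_le (degree_mul_le _ _)) (wb_two_add hy hv)

/-- E·E → E -/
lemma Erep.mul {a b : ℝ} {k l : ℕ} {p q : Polynomial ℝ}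
    (hp : Erep a b k p) (hq : Erep a b l q) : Erep a b (k + l) (p * q) := by
  obtain ⟨x, y, hx, hy, hxy⟩ := hp
  obtain ⟨u, v, hu, hv, huv⟩ := hq
  refine ⟨x * u - ((X - C a) * (C b - X)) * (y * v), x * v + y * u, ?_, ?_, ?_⟩
  · exact (degree_sub_le _ _).trans (max_le (degree_mul_le' hx hu) (degree_g_mul_le hy hv))
  · exact (degree_add_le _ _).trans_lt (max_lt (degree_mul_lt hx hv) (degree_mul_lt' hy hu))
  · intro w
    simp only [eval_mul, eval_add, eval_sub, eval_X, eval_C, hxy w, huv w]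
    ring

/-- O·O → E -/
lemma Orep.mul {a b : ℝ} {k l : ℕ} {p q : Polynomial ℝ}
    (hp : Orep a b k p) (hq : Orep a b l q) : Erep a b (k + l + 1) (p * q) := by
  obtain ⟨x, y, hx, hy, hxy⟩ := hp
  obtain ⟨u, v, hu, hv, huv⟩ := hq
  refine ⟨(X - C a) * (x * u) - (C b - X) * (y * v), x * v + y * u, ?_, ?_, ?_⟩
  · refine (degree_sub_le _ _).trans (max_le ?_ ?_)
    · refine (degree_mul_le _ _).trans ?_
      rw [degree_X_sub_C]
      have := degree_mul_le' hx hu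
      calc (1 : WithBot ℕ) + (x*u).degree ≤ 1 + ((k+l:ℕ) : WithBot ℕ) := by
            exact add_le_add le_rfl this
        _ = ((k + l + 1 : ℕ) : WithBot ℕ) := by push_cast; ring
    · refine (degree_mul_le _ _).trans ?_
      have hd : (C b - X : Polynomial ℝ).degree = 1 := by
        have h : (C b - X : Polynomial ℝ) = -(X - C b) := by ring
        rw [h, degree_neg, degree_X_sub_C]
      rw [hd]
      calc (1 : WithBot ℕ) + (y*v).degree ≤ 1 + ((k+l:ℕ) : WithBot ℕ) :=
            add_le_add le_rfl (degree_mul_le' hy hv)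
        _ = ((k + l + 1 : ℕ) : WithBot ℕ) := by push_cast; ring
  · refine (degree_add_le _ _).trans_lt (max_lt ?_ ?_)
    · exact lt_of_le_of_lt (degree_mul_le' hx hv) (by exact_mod_cast WithBot.coe_lt_coe.2 (by omega : k + l < k + l + 1))
    · exact lt_of_le_of_lt (degree_mul_le' hy hu) (by exact_mod_cast WithBot.coe_lt_coe.2 (by omega : k + l < k + l + 1))
  · intro w
    simp only [eval_mul, eval_add, eval_sub, eval_X, eval_C, hxy w, huv w]
    ring

/-- E·O → O -/
lemma Erep.mulO {a b : ℝ} {k l : ℕ} {p q : Polynomial ℝ}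
    (hp : Erep a b k p) (hq : Orep a b l q) : Orep a b (k + l) (p * q) := by
  obtain ⟨x, y, hx, hy, hxy⟩ := hp
  obtain ⟨u, v, hu, hv, huv⟩ := hq
  refine ⟨x * u + (C b - X) * (y * v), x * v - (X - C a) * (y * u), ?_, ?_, ?_⟩
  · refine (degree_add_le _ _).trans (max_le (degree_mul_le' hx hu) ?_)
    refine (degree_mul_le _ _).trans ?_
    have hd : (C b - X : Polynomial ℝ).degree = 1 := by
      have h : (C b - X : Polynomial ℝ) = -(X - C b) := by ring
      rw [h, degree_neg, degree_X_sub_C]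
    rw [hd]
    have h1 : (y * v).degree < ((k + l : ℕ) : WithBot ℕ) := degree_mul_lt' hy hv
    calc (1 : WithBot ℕ) + (y*v).degree ≤ 1 + (y*v).degree := le_rfl
      _ ≤ ((k + l : ℕ) : WithBot ℕ) := by
          cases hyy : (y*v).degree with
          | bot => rw [WithBot.add_bot]; exact bot_le
          | coe n =>
            rw [hyy] at h1
            have : n < k + l := by
              rw [Nat.cast_withBot, WithBot.coe_lt_coe] at h1; exact h1
            have h2 : (1 : WithBot ℕ) = ((1:ℕ) : WithBot ℕ) := rfl
            rw [h2, Nat.cast_withBot, Nat.cast_withBot, ← WithBot.coe_add, WithBot.coe_le_coe]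
            omega
  · refine (degree_sub_le _ _).trans (max_le (degree_mul_le' hx hv) ?_)
    refine (degree_mul_le _ _).trans ?_
    rw [degree_X_sub_C]
    have h1 : (y * u).degree < ((k + l : ℕ) : WithBot ℕ) := degree_mul_lt' hy hu
    cases hyy : (y*u).degree with
    | bot => rw [WithBot.add_bot]; exact bot_le
    | coe n =>
      rw [hyy] at h1
      have : n < k + l := by
        rw [Nat.cast_withBot, WithBot.coe_lt_coe] at h1; exact h1
      have h2 : (1 : WithBot ℕ) = ((1:ℕ) : WithBot ℕ) := rfl
      rw [h2, Nat.cast_withBot, Nat.cast_withBot, ← WithBot.coe_add, WithBot.coe_le_coe]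
      omega
  · intro w
    simp only [eval_mul, eval_add, eval_sub, eval_X, eval_C, hxy w, huv w]
    ring

lemma degree_C_le' {c : ℝ} {k : ℕ} : (C c : Polynomial ℝ).degree ≤ (k : ℕ) :=
  degree_C_le.trans (by exact_mod_cast WithBot.coe_le_coe.2 (Nat.zero_le k))

lemma Erep_const {a b : ℝ} {c : ℝ} (hc : 0 ≤ c) (k : ℕ) : Erep a b k (C c) := by
  refine ⟨C (Real.sqrt c), 0, degree_C_le', by rw [degree_zero]; exact WithBot.bot_lt_coe _, ?_⟩
  intro w
  simp [Real.sq_sqrt hc]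

lemma Orep_const {a b : ℝ} (hab : a < b) {c : ℝ} (hc : 0 ≤ c) (k : ℕ) : Orep a b k (C c) := by
  have hba : 0 < b - a := by linarith
  refine ⟨C (Real.sqrt (c / (b - a))), C (Real.sqrt (c / (b - a))), degree_C_le', degree_C_le', ?_⟩
  intro w
  have h : Real.sqrt (c / (b - a)) ^ 2 = c / (b - a) := Real.sq_sqrt (by positivity)
  simp only [eval_C, h]
  field_simp
  ring

lemma Orep_left {a b : ℝ} (hab : a < b) {r : ℝ} (hr : r ≤ a) : Orep a b 0 (X - C r) := by
  have hba : 0 < b - a := by linarith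
  refine ⟨C (Real.sqrt ((b - r) / (b - a))), C (Real.sqrt ((a - r) / (b - a))),
    degree_C_le', degree_C_le', ?_⟩
  intro w
  have h1 : Real.sqrt ((b - r) / (b - a)) ^ 2 = (b - r) / (b - a) :=
    Real.sq_sqrt (by apply div_nonneg <;> linarith)
  have h2 : Real.sqrt ((a - r) / (b - a)) ^ 2 = (a - r) / (b - a) :=
    Real.sq_sqrt (by apply div_nonneg <;> linarith)
  simp only [eval_sub, eval_X, eval_C, h1, h2]
  field_simp
  ring

lemma Orep_right {a b : ℝ} (hab : a < b) {r : ℝ} (hr : b ≤ r) : Orep a b 0 (C r - X) := by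
  have hba : 0 < b - a := by linarith
  refine ⟨C (Real.sqrt ((r - b) / (b - a))), C (Real.sqrt ((r - a) / (b - a))),
    degree_C_le', degree_C_le', ?_⟩
  intro w
  have h1 : Real.sqrt ((r - b) / (b - a)) ^ 2 = (r - b) / (b - a) :=
    Real.sq_sqrt (by apply div_nonneg <;> linarith)
  have h2 : Real.sqrt ((r - a) / (b - a)) ^ 2 = (r - a) / (b - a) :=
    Real.sq_sqrt (by apply div_nonneg <;> linarith)
  simp only [eval_sub, eval_X, eval_C, h1, h2]
  field_simp
  ring

lemma Erep_sq_linear {a b : ℝ} (r : ℝ) : Erep a b 1 ((X - C r) ^ 2) := by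
  refine ⟨X - C r, 0, ?_, by rw [degree_zero]; exact WithBot.bot_lt_coe _, ?_⟩
  · rw [degree_X_sub_C]; exact le_rfl
  · intro w; simp

lemma Erep_quadratic {a b : ℝ} (hab : a < b) {c d : ℝ} (hdisc : c ^ 2 - 4 * d < 0) :
    Erep a b 1 (X ^ 2 + C c * X + C d) := by
  have hba : (0:ℝ) < (a - b) ^ 2 := by nlinarith
  obtain ⟨t, ht0, hphi⟩ : ∃ t : ℝ, 0 < t ∧
      (a - b) ^ 2 * t ^ 2 - (2 * c * (a + b) + 4 * a * b + 4 * d) * t + (c ^ 2 - 4 * d) = 0 := by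
    set G : ℝ := 2 * c * (a + b) + 4 * a * b + 4 * d with hG
    obtain ⟨s, hs0, hs2⟩ : ∃ s : ℝ, 0 ≤ s ∧ s ^ 2 = G ^ 2 - 4 * (a - b) ^ 2 * (c ^ 2 - 4 * d) :=
      ⟨Real.sqrt _, Real.sqrt_nonneg _, Real.sq_sqrt (by nlinarith)⟩
    have hGs : G < s := by nlinarith [hs0, sq_nonneg (s - G), sq_nonneg (s + G)]
    refine ⟨(G + s) / (2 * (a - b) ^ 2), div_pos (by nlinarith [hs2, hGs, hs0, mul_pos hba (show (0:ℝ) < 4*d - c^2 by linarith)]) (by positivity), ?_⟩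
    have he : 2 * (a - b) ^ 2 * ((G + s) / (2 * (a - b) ^ 2)) = G + s := by
      have hab' : a - b ≠ 0 := sub_ne_zero.mpr hab.ne
      field_simp
    set u : ℝ := (G + s) / (2 * (a - b) ^ 2)
    have h4 : 4 * (a - b) ^ 2 * ((a - b) ^ 2 * u ^ 2 - G * u + (c ^ 2 - 4 * d)) = 0 := by
      linear_combination (2 * (a - b) ^ 2 * u + s - G) * he + hs2
    have := mul_eq_zero.mp h4
    rcases this with h | h
    · exact absurd h (by positivity)
    · exact h
  have hA0 : (0:ℝ) < 1 + t := by linarith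
  have hBD : (c - t * (a + b)) ^ 2 = 4 * ((1 + t) * (d + t * a * b)) := by
    linear_combination hphi
  set α : ℝ := Real.sqrt (1 + t) with hα
  have hα2 : α ^ 2 = 1 + t := Real.sq_sqrt hA0.le
  have hα0 : 0 < α := Real.sqrt_pos.2 hA0
  set β : ℝ := (c - t * (a + b)) / (2 * α) with hβ
  have hαβ : 2 * (α * β) = c - t * (a + b) := by
    rw [hβ]; field_simp
  have hβ2 : β ^ 2 = d + t * a * b := by
    rw [hβ, div_pow]
    rw [show (2 * α) ^ 2 = 4 * (1 + t) by rw [mul_pow, hα2]; ring]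
    rw [hBD]
    field_simp
  have hst : Real.sqrt t ^ 2 = t := Real.sq_sqrt ht0.le
  refine ⟨C α * X + C β, C (Real.sqrt t), ?_, ?_, ?_⟩
  · exact degree_linear_le
  · exact lt_of_le_of_lt degree_C_le (by exact_mod_cast WithBot.coe_lt_coe.2 Nat.zero_lt_one)
  · intro w
    simp only [eval_add, eval_mul, eval_pow, eval_X, eval_C, hst]
    linear_combination (-(w^2)) * hα2 - w * hαβ - hβ2



lemma nonneg_of_mul_nonneg {a b : ℝ} (hab : a < b) {f q : Polynomial ℝ} (hf0 : f ≠ 0)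
    (hf : ∀ w ∈ Icc a b, 0 ≤ f.eval w)
    (hfq : ∀ w ∈ Icc a b, 0 ≤ f.eval w * q.eval w) :
    ∀ w ∈ Icc a b, 0 ≤ q.eval w := by
  by_contra hcon
  push_neg at hcon
  obtain ⟨w₀, hw₀, hq0⟩ := hcon
  have hU : IsOpen {w : ℝ | q.eval w < 0} := by
    have : Continuous fun w : ℝ => q.eval w := q.continuous
    exact isOpen_lt this continuous_const
  obtain ⟨δ, hδ0, hball⟩ := Metric.isOpen_iff.mp hU w₀ hq0
  set lo := max a (w₀ - δ) with hlo
  set hi := min b (w₀ + δ) with hhi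
  have hlohi : lo < hi := by
    rw [hlo, hhi]
    rcases hw₀ with ⟨h1, h2⟩
    apply max_lt <;> apply lt_min <;> linarith
  have hsub : Ioo lo hi ⊆ {x : ℝ | f.IsRoot x} := by
    intro w hw
    obtain ⟨hw1, hw2⟩ := hw
    have hwa : a < w := lt_of_le_of_lt (le_max_left _ _) hw1
    have hwb : w < b := lt_of_lt_of_le hw2 (min_le_left _ _)
    have hwI : w ∈ Icc a b := ⟨hwa.le, hwb.le⟩
    have hwball : w ∈ Metric.ball w₀ δ := by
      rw [Metric.mem_ball, Real.dist_eq, abs_sub_lt_iff]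
      constructor
      · have := lt_of_lt_of_le hw2 (min_le_right _ _); linarith
      · have := lt_of_le_of_lt (le_max_right a (w₀ - δ)) hw1; linarith
    have hqw : q.eval w < 0 := hball hwball
    have h1 := hf w hwI
    have h2 := hfq w hwI
    have : f.eval w ≤ 0 := by nlinarith
    have : f.eval w = 0 := le_antisymm this h1
    exact this
  have : {x : ℝ | f.IsRoot x}.Infinite :=
    Set.Infinite.mono hsub (Set.infinite_coe_iff.mp (Set.Ioo.infinite hlohi))
  exact hf0 (Polynomial.eq_zero_of_infinite_isRoot f this)

lemma interior_root_double {a b r : ℝ} (hab : a < b) (har : a < r) (hrb : r < b)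
    {p q₀ : Polynomial ℝ} (hp : p = (X - C r) * q₀)
    (hnn : ∀ w ∈ Icc a b, 0 ≤ p.eval w) : q₀.IsRoot r := by
  have hX : (X - C r : Polynomial ℝ) ≠ 0 := X_sub_C_ne_zero r
  have hXn : (C r - X : Polynomial ℝ) ≠ 0 := by
    intro h
    apply hX
    have : (X - C r : Polynomial ℝ) = -(C r - X) := by ring
    rw [this, h, neg_zero]
  have hle : q₀.eval r ≤ 0 := by
    have h := nonneg_of_mul_nonneg har (f := C r - X) (q := -q₀) hXn
      (fun w hw => by simp only [eval_sub, eval_C, eval_X]; linarith [hw.2])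
      (fun w hw => by
        have hw' : w ∈ Icc a b := ⟨hw.1, le_trans hw.2 hrb.le⟩
        have := hnn w hw'
        rw [hp] at this
        simp only [eval_mul, eval_sub, eval_C, eval_X, eval_neg] at this ⊢
        nlinarith)
    have := h r ⟨har.le, le_refl r⟩
    simp only [eval_neg] at this
    linarith
  have hge : 0 ≤ q₀.eval r := by
    have h := nonneg_of_mul_nonneg hrb (f := X - C r) (q := q₀) hX
      (fun w hw => by simp only [eval_sub, eval_C, eval_X]; linarith [hw.1])
      (fun w hw => by
        have hw' : w ∈ Icc a b := ⟨le_trans har.le hw.1, hw.2⟩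
        have := hnn w hw'
        rw [hp] at this
        simpa using this)
    exact h r ⟨le_refl r, hrb.le⟩
  exact le_antisymm hle hge


lemma Erep_zero {a b : ℝ} (k : ℕ) : Erep a b k 0 :=
  ⟨0, 0, by rw [degree_zero]; exact bot_le, by rw [degree_zero]; exact WithBot.bot_lt_coe _,
    fun w => by simp⟩

lemma Orep_zero {a b : ℝ} (k : ℕ) : Orep a b k 0 :=
  ⟨0, 0, by rw [degree_zero]; exact bot_le, by rw [degree_zero]; exact bot_le,
    fun w => by simp⟩
lemma main {a b : ℝ} (hab : a < b) (n : ℕ) :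
    ∀ p : Polynomial ℝ, p.natDegree = n → (∀ w ∈ Icc a b, 0 ≤ p.eval w) →
      ∀ m : ℕ, (n ≤ 2 * m → Erep a b m p) ∧ (n ≤ 2 * m + 1 → Orep a b m p) := by
  induction n using Nat.strong_induction_on with
  | _ n IH =>
  intro p hpn hnn m
  rcases eq_or_ne p 0 with rfl | hp0
  · exact ⟨fun _ => Erep_zero m, fun _ => Orep_zero m⟩
  rcases Nat.eq_zero_or_pos n with hn0 | hn1
  · -- constant
    subst hn0
    have hpc : p = C (p.coeff 0) := Polynomial.eq_C_of_natDegree_le_zero (le_of_eq hpn)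
    have hc : 0 ≤ p.coeff 0 := by
      have := hnn a ⟨le_rfl, hab.le⟩
      rwa [hpc, eval_C] at this
    exact ⟨fun _ => hpc ▸ Erep_const hc m, fun _ => hpc ▸ Orep_const hab hc m⟩
  by_cases hroot : ∃ r : ℝ, p.IsRoot r
  · obtain ⟨r, hr⟩ := hroot
    obtain ⟨q, hq⟩ := (dvd_iff_isRoot.2 hr)
    have hq0 : q ≠ 0 := fun h => hp0 (by rw [hq, h, mul_zero])
    have hqd : q.natDegree = n - 1 := by
      have := Polynomial.natDegree_mul (X_sub_C_ne_zero r) hq0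
      rw [← hq, natDegree_X_sub_C, hpn] at this
      omega
    by_cases hra : r ≤ a
    · -- left root
      have hfnn : ∀ w ∈ Icc a b, 0 ≤ (X - C r : Polynomial ℝ).eval w := fun w hw => by
        simp only [eval_sub, eval_X, eval_C]; linarith [hw.1]
      have hqnn : ∀ w ∈ Icc a b, 0 ≤ q.eval w := by
        refine nonneg_of_mul_nonneg hab (X_sub_C_ne_zero r) hfnn (fun w hw => ?_)
        have := hnn w hw
        rw [hq, eval_mul] at this
        exact this
      constructor
      · intro hm
        obtain ⟨m', rfl⟩ : ∃ m', m = m' + 1 := ⟨m - 1, by omega⟩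
        have hOq : Orep a b m' q := ((IH (n-1) (by omega) q hqd hqnn m').2 (by omega))
        have := (Orep_left hab hra).mul hOq
        rw [show 0 + m' + 1 = m' + 1 by omega] at this
        rwa [← hq] at this
      · intro hm
        have hEq : Erep a b m q := ((IH (n-1) (by omega) q hqd hqnn m).1 (by omega))
        have := hEq.mulO (Orep_left hab hra)
        rw [show m + 0 = m by omega, mul_comm q _, ← hq] at this
        exact this
    · by_cases hrb : b ≤ r
      · -- right root
        have heq : p = (C r - X) * (-q) := by rw [hq]; ring
        have hfnn : ∀ w ∈ Icc a b, 0 ≤ (C r - X : Polynomial ℝ).eval w := fun w hw => by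
          simp only [eval_sub, eval_X, eval_C]; linarith [hw.2]
        have hf0 : (C r - X : Polynomial ℝ) ≠ 0 := by
          intro h
          apply X_sub_C_ne_zero r
          have : (X - C r : Polynomial ℝ) = -(C r - X) := by ring
          rw [this, h, neg_zero]
        have hqnn : ∀ w ∈ Icc a b, 0 ≤ (-q).eval w := by
          refine nonneg_of_mul_nonneg hab hf0 hfnn (fun w hw => ?_)
          have := hnn w hw
          rw [heq, eval_mul] at this
          exact this
        have hqd' : (-q).natDegree = n - 1 := by rwa [natDegree_neg]
        constructor
        · intro hm
          obtain ⟨m', rfl⟩ : ∃ m', m = m' + 1 := ⟨m - 1, by omega⟩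
          have hOq : Orep a b m' (-q) := ((IH (n-1) (by omega) (-q) hqd' hqnn m').2 (by omega))
          have := (Orep_right hab hrb).mul hOq
          rw [show 0 + m' + 1 = m' + 1 by omega] at this
          rwa [← heq] at this
        · intro hm
          have hEq : Erep a b m (-q) := ((IH (n-1) (by omega) (-q) hqd' hqnn m).1 (by omega))
          have := hEq.mulO (Orep_right hab hrb)
          rw [show m + 0 = m by omega, mul_comm (-q) _, ← heq] at this
          exact this
      · -- interior root
        push_neg at hra hrb
        have hq2root : q.IsRoot r := interior_root_double hab hra hrb hq hnn
        obtain ⟨q₂, hq₂⟩ := (dvd_iff_isRoot.2 hq2root)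
        have hpq : p = (X - C r) ^ 2 * q₂ := by rw [hq, hq₂]; ring
        have hq₂0 : q₂ ≠ 0 := fun h => hp0 (by rw [hpq, h, mul_zero])
        have hfne : ((X - C r : Polynomial ℝ)) ^ 2 ≠ 0 := pow_ne_zero _ (X_sub_C_ne_zero r)
        have hq₂d : q₂.natDegree = n - 2 := by
          have := Polynomial.natDegree_mul hfne hq₂0
          rw [← hpq, hpn] at this
          have h2 : ((X - C r : Polynomial ℝ) ^ 2).natDegree = 2 := by
            rw [natDegree_pow, natDegree_X_sub_C]
          omega
        have hn2 : 2 ≤ n := by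
          have := Polynomial.natDegree_mul hfne hq₂0
          rw [← hpq, hpn] at this
          rw [natDegree_pow, natDegree_X_sub_C] at this
          omega
        have hq₂nn : ∀ w ∈ Icc a b, 0 ≤ q₂.eval w := by
          refine nonneg_of_mul_nonneg hab hfne (fun w hw => by simp [even_two.pow_nonneg]) ?_
          intro w hw
          have := hnn w hw
          rw [hpq, eval_mul] at this
          exact this
        constructor
        · intro hm
          obtain ⟨m', rfl⟩ : ∃ m', m = m' + 1 := ⟨m - 1, by omega⟩
          have hEq : Erep a b m' q₂ := ((IH (n-2) (by omega) q₂ hq₂d hq₂nn m').1 (by omega))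
          have := (Erep_sq_linear (a := a) (b := b) r).mul hEq
          rw [show 1 + m' = m' + 1 by omega] at this
          rwa [← hpq] at this
        · intro hm
          obtain ⟨m', rfl⟩ : ∃ m', m = m' + 1 := ⟨m - 1, by omega⟩
          have hOq : Orep a b m' q₂ := ((IH (n-2) (by omega) q₂ hq₂d hq₂nn m').2 (by omega))
          have := (Erep_sq_linear (a := a) (b := b) r).mulO hOq
          rw [show 1 + m' = m' + 1 by omega] at this
          rwa [← hpq] at this
  · -- no real root: positive definite quadratic factor
    push_neg at hroot
    have hdeg0 : p.degree ≠ 0 := by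
      rw [degree_eq_natDegree hp0, hpn]
      intro h
      have : n = 0 := by exact_mod_cast h
      omega
    obtain ⟨z, hz⟩ := IsAlgClosed.exists_aeval_eq_zero ℂ p hdeg0
    have hzim : z.im ≠ 0 := by
      intro h0
      apply hroot z.re
      have h1 : aeval (z.re : ℂ) p = 0 := by
        rwa [show (z.re : ℂ) = z from Complex.ext rfl h0.symm]
      have h2 : (algebraMap ℝ ℂ) (aeval z.re p) = 0 := by
        rw [← Polynomial.aeval_algebraMap_apply]
        exact h1
      have h3 : aeval z.re p = 0 := (map_eq_zero_iff _ (algebraMap ℝ ℂ).injective).mp h2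
      simpa [Polynomial.aeval_def] using h3
    obtain ⟨q, hq⟩ := p.quadratic_dvd_of_aeval_eq_zero_im_ne_zero hz hzim
    set f : Polynomial ℝ := X ^ 2 - C (2 * z.re) * X + C (‖z‖ ^ 2) with hf
    have hnormsq : ‖z‖ ^ 2 = z.re ^ 2 + z.im ^ 2 := by
      rw [Complex.sq_norm, Complex.normSq_apply]; ring
    have hdisc : (-(2 * z.re)) ^ 2 - 4 * (‖z‖ ^ 2) < 0 := by
      rw [hnormsq]
      nlinarith [(by positivity : (0:ℝ) < z.im ^ 2)]
    have hfform : f = X ^ 2 + C (-(2 * z.re)) * X + C (‖z‖ ^ 2) := by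
      rw [hf, map_neg]; ring
    have hf0 : f ≠ 0 := by
      intro h
      have : f.natDegree = 2 := by rw [hf]; compute_degree!
      rw [h, natDegree_zero] at this
      omega
    have hfd : f.natDegree = 2 := by rw [hf]; compute_degree!
    have hq0 : q ≠ 0 := fun h => hp0 (by rw [hq, h, mul_zero])
    have hqd : q.natDegree = n - 2 := by
      have := Polynomial.natDegree_mul hf0 hq0
      rw [← hq, hpn, hfd] at this
      omega
    have hn2 : 2 ≤ n := by
      have := Polynomial.natDegree_mul hf0 hq0
      rw [← hq, hpn, hfd] at this
      omega
    have hfnn : ∀ w ∈ Icc a b, 0 ≤ f.eval w := fun w _ => by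
      simp only [hf, eval_add, eval_sub, eval_mul, eval_pow, eval_X, eval_C, hnormsq]
      nlinarith [sq_nonneg (w - z.re)]
    have hqnn : ∀ w ∈ Icc a b, 0 ≤ q.eval w := by
      refine nonneg_of_mul_nonneg hab hf0 hfnn (fun w hw => ?_)
      have := hnn w hw
      rw [hq, eval_mul] at this
      exact this
    have hEf : Erep a b 1 f := hfform ▸ Erep_quadratic hab hdisc
    constructor
    · intro hm
      obtain ⟨m', rfl⟩ : ∃ m', m = m' + 1 := ⟨m - 1, by omega⟩
      have hEq : Erep a b m' q := ((IH (n-2) (by omega) q hqd hqnn m').1 (by omega))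
      have := hEf.mul hEq
      rw [show 1 + m' = m' + 1 by omega] at this
      rwa [← hq] at this
    · intro hm
      obtain ⟨m', rfl⟩ : ∃ m', m = m' + 1 := ⟨m - 1, by omega⟩
      have hOq : Orep a b m' q := ((IH (n-2) (by omega) q hqd hqnn m').2 (by omega))
      have := hEf.mulO hOq
      rw [show 1 + m' = m' + 1 by omega] at this
      rwa [← hq] at this


end ML

open Polynomial

theorem markov_lukasz
    (a b : ℝ) (hab : a < b) (m : ℕ) (p : Polynomial ℝ) (hdeg : p.degree ≤ (2 * m : ℕ)) :
    (∀ w ∈ Set.Icc a b, 0 ≤ p.eval w) ↔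
    ∃ q₁ q₂ : Polynomial ℝ, q₁.degree ≤ (m : ℕ) ∧ q₂.degree < (m : ℕ) ∧
      ∀ w : ℝ, p.eval w = (q₁.eval w) ^ 2 + (w - a) * (b - w) * (q₂.eval w) ^ 2 := by
  constructor
  · intro hnn
    have hnd : p.natDegree ≤ 2 * m := Polynomial.natDegree_le_iff_degree_le.2 hdeg
    obtain ⟨x, y, hx, hy, hxy⟩ := (ML.main hab p.natDegree p rfl hnn m).1 hnd
    exact ⟨x, y, hx, hy, hxy⟩
  · rintro ⟨q₁, q₂, _, _, hrep⟩ w hw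
    rw [hrep w]
    have h1 : 0 ≤ w - a := by linarith [hw.1]
    have h2 : 0 ≤ b - w := by linarith [hw.2]
    have h3 := mul_nonneg (mul_nonneg h1 h2) (sq_nonneg (q₂.eval w))
    nlinarith [sq_nonneg (q₁.eval w)]
end

section
/- Let A ∈ ℝ^{n×n} be diagonalizable with real rational eigenvalues λ_r = η_r/ρ, η_r ∈ ℤ, ρ ∈ ℕ, ρ > 0, and spectral decomposition e^{At} = Σ_r φ^r e^{λ_r t}. Fix h ∈ ℝ^n, v ∈ ℝ, x ∈ ℝ^n, and T > 0. Set η̄ := max(0, max_r η_r), W := e^{−T/ρ}. Then the condition hᵀ e^{At} x ≤ v for all t ∈ [0,T] holds if and only if the polynomial P(w) := v w^{η̄} − Σ_r (hᵀ φ^r x) w^{η̄ − η_r} satisfies P(w) ≥ 0 for all w ∈ [W, 1]. -/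
open Matrix Set Finset

theorem intersample_constraint_iff_polynomial_nonneg
    (n : ℕ) (A : Matrix (Fin n) (Fin n) ℝ)
    (φ : Fin n → Matrix (Fin n) (Fin n) ℝ) (η : Fin n → ℤ) (ρ : ℕ) (hρ : 0 < ρ)
    (hspec : ∀ t : ℝ, NormedSpace.exp (t • A) =
      ∑ r : Fin n, Real.exp (((η r : ℝ) / (ρ : ℝ)) * t) • φ r)
    (h x : Fin n → ℝ) (v T : ℝ) (hT : 0 < T) :
    (∀ t ∈ Set.Icc (0 : ℝ) T, h ⬝ᵥ ((NormedSpace.exp (t • A)).mulVec x) ≤ v) ↔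
    (∀ w ∈ Set.Icc (Real.exp (-(T / (ρ : ℝ)))) 1,
        0 ≤ v * w ^ (Finset.univ.sup fun r => (η r).toNat)
          - ∑ r : Fin n, (h ⬝ᵥ ((φ r).mulVec x)) *
              w ^ ((((Finset.univ.sup fun r' => (η r').toNat) : ℕ) : ℤ) - η r).toNat) := by
  have hρR : (0:ℝ) < (ρ:ℝ) := by exact_mod_cast hρ
  set N : ℕ := Finset.univ.sup fun r => (η r).toNat with hNdef
  have hNr : ∀ r : Fin n, η r ≤ (N:ℤ) := by
    intro r
    have h1 : (η r).toNat ≤ N :=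
      Finset.le_sup (f := fun r => (η r).toNat) (Finset.mem_univ r)
    exact (Int.self_le_toNat _).trans (by exact_mod_cast h1)
  have hcast : ∀ r : Fin n, ((((N:ℤ) - η r).toNat : ℝ)) = (N:ℝ) - (η r : ℝ) := by
    intro r
    have h0 : (0:ℤ) ≤ (N:ℤ) - η r := by linarith [hNr r]
    have h2 : ((((N:ℤ) - η r).toNat : ℤ)) = (N:ℤ) - η r := Int.toNat_of_nonneg h0
    exact_mod_cast h2
  have key : ∀ t : ℝ,
      (0 ≤ v * (Real.exp (-(t/(ρ:ℝ)))) ^ N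
        - ∑ r : Fin n, (h ⬝ᵥ ((φ r).mulVec x)) *
            (Real.exp (-(t/(ρ:ℝ)))) ^ ((N:ℤ) - η r).toNat)
      ↔ h ⬝ᵥ ((NormedSpace.exp (t • A)).mulVec x) ≤ v := by
    intro t
    have hsum : h ⬝ᵥ ((NormedSpace.exp (t • A)).mulVec x)
        = ∑ r : Fin n, Real.exp (((η r : ℝ) / (ρ:ℝ)) * t) * (h ⬝ᵥ ((φ r).mulVec x)) := by
      let L : Matrix (Fin n) (Fin n) ℝ →ₗ[ℝ] ℝ :=
        { toFun := fun M => h ⬝ᵥ M.mulVec x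
          map_add' := fun M₁ M₂ => by
            simp [Matrix.add_mulVec, dotProduct_add]
          map_smul' := fun c M => by
            simp [Matrix.smul_mulVec] }
      have hL : ∀ M, L M = h ⬝ᵥ M.mulVec x := fun _ => rfl
      rw [← hL, hspec t, map_sum]
      apply Finset.sum_congr rfl
      intro r _
      rw [hL, Matrix.smul_mulVec, dotProduct_smul, smul_eq_mul]
    have hpow : ∀ (k : ℕ), (Real.exp (-(t/(ρ:ℝ)))) ^ k = Real.exp (-(t/(ρ:ℝ)) * k) := by
      intro k
      rw [← Real.exp_nat_mul]; ring_nf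
    have hfac : v * (Real.exp (-(t/(ρ:ℝ)))) ^ N
        - ∑ r : Fin n, (h ⬝ᵥ ((φ r).mulVec x)) *
            (Real.exp (-(t/(ρ:ℝ)))) ^ ((N:ℤ) - η r).toNat
        = Real.exp (-(t/(ρ:ℝ)) * N) *
          (v - ∑ r : Fin n, Real.exp (((η r : ℝ) / (ρ:ℝ)) * t) * (h ⬝ᵥ ((φ r).mulVec x))) := by
      rw [hpow N, mul_sub, Finset.mul_sum]
      congr 1
      · ring
      apply Finset.sum_congr rfl
      intro r _
      rw [hpow, hcast r]
      have hexp : (-(t/(ρ:ℝ))) * ((N:ℝ) - (η r : ℝ))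
          = (-(t/(ρ:ℝ)) * (N:ℝ)) + ((η r : ℝ)/(ρ:ℝ) * t) := by
        field_simp; ring
      rw [hexp, Real.exp_add]
      ring
    rw [hsum, hfac]
    rw [mul_nonneg_iff_of_pos_left (Real.exp_pos _)]
    constructor
    · intro h0; linarith
    · intro h0; linarith
  constructor
  · intro hct w hw
    obtain ⟨hw1, hw2⟩ := hw
    have hwpos : 0 < w := lt_of_lt_of_le (Real.exp_pos _) hw1
    set t : ℝ := -((ρ:ℝ) * Real.log w) with ht
    have hwt : Real.exp (-(t/(ρ:ℝ))) = w := by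
      rw [ht, show -(-((ρ:ℝ) * Real.log w)/(ρ:ℝ)) = Real.log w by field_simp]
      exact Real.exp_log hwpos
    have hlw : Real.log w ≤ 0 := Real.log_nonpos (le_of_lt hwpos) hw2
    have hlw2 : -(T/(ρ:ℝ)) ≤ Real.log w := (Real.le_log_iff_exp_le hwpos).mpr hw1
    have ht0 : 0 ≤ t := by rw [ht]; nlinarith
    have htT : t ≤ T := by
      rw [ht]
      have : (ρ:ℝ) * (-(T/(ρ:ℝ))) ≤ (ρ:ℝ) * Real.log w :=
        mul_le_mul_of_nonneg_left hlw2 (le_of_lt hρR)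
      have h3 : (ρ:ℝ) * (-(T/(ρ:ℝ))) = -T := by field_simp
      linarith
    have := (key t).mpr (hct t ⟨ht0, htT⟩)
    rw [hwt] at this
    exact this
  · intro hpoly t htm
    obtain ⟨ht0, htT⟩ := htm
    apply (key t).mp
    apply hpoly
    constructor
    · apply Real.exp_le_exp.mpr
      have : t/(ρ:ℝ) ≤ T/(ρ:ℝ) := by gcongr
      linarith
    · calc Real.exp (-(t/(ρ:ℝ))) ≤ Real.exp 0 := by
            apply Real.exp_le_exp.mpr
            have : 0 ≤ t/(ρ:ℝ) := div_nonneg ht0 (le_of_lt hρR)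
            linarith
        _ = 1 := Real.exp_zero
end
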